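/- Suppose A(x) = B(x)·C(x) (Cauchy product), where A(x) and B(x) have nonnegative coefficients and C(x) is not the zero power series. If (i) eventually a(n) > 0 and a(n−1) ≤ a(n), (ii) b(n) = o(a(n)), and (iii) C(x) ∈ RT1, then A(x) ∈ RT1. -/

import Mathlib

open Filter Finset

noncomputable section

/-- `R ∈ RT1`: coefficients eventually positive and `r(n-1)/r(n) → 1`. -/
def RT1 (r : ℕ → ℝ) : Prop :=
  (∀ᶠ n in Filter.atTop, 0 < r n) ∧
    Filter.Tendsto (fun n => r (n - 1) / r n) Filter.atTop (nhds 1)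

/-- The coefficients are all natural numbers. -/
def IsNatSeries (r : ℕ → ℝ) : Prop := ∀ n, ∃ k : ℕ, r n = (k : ℝ)

/-- Members of `RT1` with natural-number coefficients. -/
def RTN1 (r : ℕ → ℝ) : Prop := RT1 r ∧ IsNatSeries r

/-- Coefficient sequence of `R(x^d)`. -/
def substPow (d : ℕ) (r : ℕ → ℝ) : ℕ → ℝ := fun n => if d ∣ n then r (n / d) else 0

/-- Cauchy product of coefficient sequences. -/
def cauchy (a b : ℕ → ℝ) : ℕ → ℝ := fun n => ∑ j ∈ Finset.range (n + 1), a j * b (n - j)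

set_option maxHeartbeats 1000000 in
/-- Variation on Schur: if `A = B·C` with `A, B` nonnegative, `C ≠ 0`, eventually
`a(n) > 0` and `a(n-1) ≤ a(n)`, `b(n) = o(a(n))`, and `C ∈ RT1`, then `A ∈ RT1`. -/
theorem var_on_schur (a b c : ℕ → ℝ) (hab : a = cauchy b c)
    (hA : ∀ n, 0 ≤ a n) (hB : ∀ n, 0 ≤ b n) (hC : c ≠ 0)
    (h1 : ∀ᶠ n in Filter.atTop, 0 < a n ∧ a (n - 1) ≤ a n)
    (h2 : Filter.Tendsto (fun n => b n / a n) Filter.atTop (nhds 0))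
    (h3 : RT1 c) : RT1 a := by
  have hApos : ∀ᶠ n in atTop, 0 < a n := h1.mono fun n h => h.1
  refine ⟨hApos, ?_⟩
  have main : Tendsto (fun n => (a (n+1) - a n) / a (n+1)) atTop (nhds 0) := by
    rw [NormedAddCommGroup.tendsto_nhds_zero]
    intro ε hε
    obtain ⟨N₂, hN₂⟩ := eventually_atTop.mp h3.1
    obtain ⟨N₃, hN₃⟩ := Metric.tendsto_atTop.mp h3.2 (ε/4) (by positivity)
    obtain ⟨N, hNdef⟩ : ∃ N, N = max N₂ N₃ + 1 := ⟨_, rfl⟩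
    have hN1 : 1 ≤ N := by omega
    obtain ⟨M, hMdef⟩ : ∃ M : ℝ, M = 1 + ∑ k ∈ range N, |c k| := ⟨_, rfl⟩
    have hM1 : 1 ≤ M := by
      have : (0:ℝ) ≤ ∑ k ∈ range N, |c k| :=
        Finset.sum_nonneg fun k _ => abs_nonneg _
      rw [hMdef]; linarith
    have hMb : ∀ k, k < N → |c k| ≤ M := by
      intro k hk
      have := Finset.single_le_sum (f := fun k => |c k|)
        (fun i _ => abs_nonneg _) (Finset.mem_range.mpr hk)
      rw [hMdef]; linarith
    have cstep : ∀ k, N ≤ k → |c (k-1) - c k| ≤ ε/4 * c k := by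
      intro k hk
      have hck : 0 < c k := hN₂ k (by omega)
      have hd := hN₃ k (by omega)
      rw [Real.dist_eq] at hd
      have he : c (k-1) - c k = (c (k-1)/c k - 1) * c k := by field_simp
      rw [he, abs_mul, abs_of_pos hck]
      exact mul_le_mul_of_nonneg_right hd.le hck.le
    have hN0r : (0:ℝ) < (N:ℝ) := by exact_mod_cast (by omega : 0 < N)
    have hM0 : (0:ℝ) < M := by linarith
    obtain ⟨K, hKdef⟩ : ∃ K : ℝ, K = M + ε/4*M + ε/4*M*(N:ℝ) + 2*M*(N:ℝ) := ⟨_, rfl⟩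
    have hKpos : 0 < K := by
      have t1 : 0 < ε/4*M := by nlinarith
      have t2 : 0 < ε/4*M*(N:ℝ) := by nlinarith
      have t3 : 0 < 2*M*(N:ℝ) := by nlinarith
      rw [hKdef]; linarith
    obtain ⟨δ, hδdef⟩ : ∃ d : ℝ, d = ε/(4*K) := ⟨_, rfl⟩
    have hδpos : 0 < δ := by rw [hδdef]; exact div_pos hε (by linarith)
    have hδK : δ * K = ε/4 := by
      rw [hδdef]; field_simp
    have hbev : ∀ᶠ m in atTop, ‖b m / a m‖ < δ :=
      NormedAddCommGroup.tendsto_nhds_zero.mp h2 δ hδpos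
    obtain ⟨n₀, hn₀⟩ := eventually_atTop.mp (h1.and hbev)
    have hapos : ∀ m, n₀ ≤ m → 0 < a m := fun m hm => (hn₀ m hm).1.1
    have hbm : ∀ m, n₀ ≤ m → b m ≤ δ * a m := by
      intro m hm
      have h := (hn₀ m hm).2
      rw [Real.norm_eq_abs] at h
      have h' := (abs_lt.mp h).2
      have := (div_lt_iff₀ (hapos m hm)).mp h'
      linarith
    have amono : ∀ m n, n₀ ≤ m → m ≤ n → a m ≤ a n := by
      intro m n hm hmn
      induction n, hmn using Nat.le_induction with
      | base => exact le_refl _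
      | succ n hn ih =>
        refine ih.trans ?_
        have := (hn₀ (n+1) (by omega)).1.2
        simpa using this
    rw [eventually_atTop]
    refine ⟨n₀ + N + 1, fun n hn => ?_⟩
    have han1 : 0 < a (n+1) := hapos _ (by omega)
    classical
    set F := Finset.range (n+1) with hFdef
    set F₁ := F.filter (fun j => N ≤ n+1-j) with hF₁def
    set F₂ := F.filter (fun j => ¬ N ≤ n+1-j) with hF₂def
    have hsplitA : a (n+1) = (∑ j ∈ F, b j * c (n+1-j)) + b (n+1) * c 0 := by
      rw [hab]
      show ∑ j ∈ Finset.range (n+1+1), b j * c (n+1-j) = _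
      rw [Finset.sum_range_succ]
      simp [hFdef]
    have han : a n = ∑ j ∈ F, b j * c (n-j) := by rw [hab]; rfl
    have hdiff : a (n+1) - a n
        = b (n+1) * c 0 + ∑ j ∈ F, b j * (c (n+1-j) - c (n-j)) := by
      rw [hsplitA, han]
      simp only [mul_sub]
      rw [Finset.sum_sub_distrib]
      ring
    -- bound on b(n+1)*c 0
    have hbn1 : b (n+1) ≤ δ * a (n+1) := hbm (n+1) (by omega)
    have hbc0 : |b (n+1) * c 0| ≤ M * (δ * a (n+1)) := by
      rw [abs_mul, abs_of_nonneg (hB (n+1))]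
      have h1' : |c 0| ≤ M := hMb 0 (by omega)
      have hbnn : 0 ≤ b (n+1) := hB _
      calc b (n+1) * |c 0| ≤ (δ * a (n+1)) * M := by
            apply mul_le_mul hbn1 h1' (abs_nonneg _)
            positivity
        _ = M * (δ * a (n+1)) := by ring
    -- F₂ facts
    have hbj2 : ∀ j ∈ F₂, b j ≤ δ * a (n+1) := by
      intro j hj
      simp only [hF₂def, Finset.mem_filter, hFdef, Finset.mem_range] at hj
      have hj0 : n₀ ≤ j := by omega
      exact (hbm j hj0).trans
        (mul_le_mul_of_nonneg_left (amono j (n+1) hj0 (by omega)) hδpos.le)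
    have hF₂card : F₂.card ≤ N := by
      have hsub : F₂ ⊆ Finset.Ico (n+2-N) (n+1) := by
        intro j hj
        simp only [hF₂def, Finset.mem_filter, hFdef, Finset.mem_range] at hj
        simp only [Finset.mem_Ico]
        omega
      calc F₂.card ≤ (Finset.Ico (n+2-N) (n+1)).card := Finset.card_le_card hsub
        _ = (n+1) - (n+2-N) := Nat.card_Ico _ _
        _ ≤ N := by omega
    have hδa : (0:ℝ) ≤ δ * a (n+1) := by positivity
    -- |sum over F₂ of b j * c(n+1-j)| ≤ N * (M * (δ a))
    have hS2' : |∑ j ∈ F₂, b j * c (n+1-j)| ≤ (N:ℝ) * (M * (δ * a (n+1))) := by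
      calc |∑ j ∈ F₂, b j * c (n+1-j)| ≤ ∑ j ∈ F₂, |b j * c (n+1-j)| :=
            Finset.abs_sum_le_sum_abs _ _
        _ ≤ F₂.card • (M * (δ * a (n+1))) := by
            apply Finset.sum_le_card_nsmul
            intro j hj
            have hb2 := hbj2 j hj
            have hcM : |c (n+1-j)| ≤ M := by
              simp only [hF₂def, Finset.mem_filter, hFdef, Finset.mem_range] at hj
              exact hMb _ (by omega)
            rw [abs_mul, abs_of_nonneg (hB j)]
            calc b j * |c (n+1-j)| ≤ (δ * a (n+1)) * M :=
                  mul_le_mul hb2 hcM (abs_nonneg _) hδa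
              _ = M * (δ * a (n+1)) := by ring
        _ = (F₂.card : ℝ) * (M * (δ * a (n+1))) := by rw [nsmul_eq_mul]
        _ ≤ (N:ℝ) * (M * (δ * a (n+1))) := by
            apply mul_le_mul_of_nonneg_right _ (by positivity)
            exact_mod_cast hF₂card
    -- sum over F₂ of |b j * (c(n+1-j) - c(n-j))| ≤ N * (2M δ a)
    have hS2 : ∑ j ∈ F₂, |b j * (c (n+1-j) - c (n-j))|
        ≤ (N:ℝ) * (2 * M * (δ * a (n+1))) := by
      calc ∑ j ∈ F₂, |b j * (c (n+1-j) - c (n-j))|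
          ≤ F₂.card • (2 * M * (δ * a (n+1))) := by
            apply Finset.sum_le_card_nsmul
            intro j hj
            have hb2 := hbj2 j hj
            have hcM : |c (n+1-j) - c (n-j)| ≤ 2 * M := by
              simp only [hF₂def, Finset.mem_filter, hFdef, Finset.mem_range] at hj
              have e1 : |c (n+1-j)| ≤ M := hMb _ (by omega)
              have e2 : |c (n-j)| ≤ M := hMb _ (by omega)
              calc |c (n+1-j) - c (n-j)| ≤ |c (n+1-j)| + |c (n-j)| := abs_sub _ _
                _ ≤ 2 * M := by linarith
            rw [abs_mul, abs_of_nonneg (hB j)]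
            calc b j * |c (n+1-j) - c (n-j)| ≤ (δ * a (n+1)) * (2*M) :=
                  mul_le_mul hb2 hcM (abs_nonneg _) hδa
              _ = 2 * M * (δ * a (n+1)) := by ring
        _ = (F₂.card : ℝ) * (2 * M * (δ * a (n+1))) := by rw [nsmul_eq_mul]
        _ ≤ (N:ℝ) * (2 * M * (δ * a (n+1))) := by
            apply mul_le_mul_of_nonneg_right _ (by positivity)
            exact_mod_cast hF₂card
    -- sum over F₁ of b j * c(n+1-j) bounded using hsplitA
    have hsplitF : (∑ j ∈ F₁, b j * c (n+1-j)) + ∑ j ∈ F₂, b j * c (n+1-j)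
        = ∑ j ∈ F, b j * c (n+1-j) := by
      simp only [hF₁def, hF₂def]
      exact Finset.sum_filter_add_sum_filter_not _ _ _
    have hS1c : ∑ j ∈ F₁, b j * c (n+1-j)
        ≤ a (n+1) + M * (δ * a (n+1)) + (N:ℝ) * (M * (δ * a (n+1))) := by
      have e : ∑ j ∈ F₁, b j * c (n+1-j)
          = a (n+1) - b (n+1) * c 0 - ∑ j ∈ F₂, b j * c (n+1-j) := by
        rw [hsplitA, ← hsplitF]; ring
      rw [e]
      have := neg_abs_le (b (n+1) * c 0)
      have := neg_abs_le (∑ j ∈ F₂, b j * c (n+1-j))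
      linarith [hbc0, hS2']
    -- sum over F₁ of abs terms
    have hS1 : ∑ j ∈ F₁, |b j * (c (n+1-j) - c (n-j))|
        ≤ ε/4 * ∑ j ∈ F₁, b j * c (n+1-j) := by
      rw [Finset.mul_sum]
      apply Finset.sum_le_sum
      intro j hj
      simp only [hF₁def, Finset.mem_filter, hFdef, Finset.mem_range] at hj
      have hk : N ≤ n+1-j := hj.2
      have hidx : (n+1-j) - 1 = n - j := by omega
      have hcs := cstep (n+1-j) hk
      rw [hidx] at hcs
      have habs : |c (n+1-j) - c (n-j)| ≤ ε/4 * c (n+1-j) := by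
        rw [abs_sub_comm]; exact hcs
      rw [abs_mul, abs_of_nonneg (hB j)]
      calc b j * |c (n+1-j) - c (n-j)| ≤ b j * (ε/4 * c (n+1-j)) :=
            mul_le_mul_of_nonneg_left habs (hB j)
        _ = ε/4 * (b j * c (n+1-j)) := by ring
    -- assemble
    have hε4 : (0:ℝ) ≤ ε/4 := by positivity
    have hfinal : |a (n+1) - a n| ≤ ε/2 * a (n+1) := by
      have step1 : |a (n+1) - a n|
          ≤ |b (n+1) * c 0| + ∑ j ∈ F, |b j * (c (n+1-j) - c (n-j))| := by
        rw [hdiff]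
        exact (abs_add_le _ _).trans
          (add_le_add_right (Finset.abs_sum_le_sum_abs _ _) _)
      have step2 : ∑ j ∈ F, |b j * (c (n+1-j) - c (n-j))|
          = (∑ j ∈ F₁, |b j * (c (n+1-j) - c (n-j))|)
            + ∑ j ∈ F₂, |b j * (c (n+1-j) - c (n-j))| := by
        simp only [hF₁def, hF₂def]
        exact (Finset.sum_filter_add_sum_filter_not _ _ _).symm
      have step3 : ε/4 * ∑ j ∈ F₁, b j * c (n+1-j)
          ≤ ε/4 * (a (n+1) + M * (δ * a (n+1)) + (N:ℝ) * (M * (δ * a (n+1)))) :=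
        mul_le_mul_of_nonneg_left hS1c hε4
      have key : |a (n+1) - a n|
          ≤ M * (δ * a (n+1))
            + (ε/4 * (a (n+1) + M * (δ * a (n+1)) + (N:ℝ) * (M * (δ * a (n+1))))
              + (N:ℝ) * (2 * M * (δ * a (n+1)))) := by
        rw [step2] at step1
        linarith [hS1, hS2, step3]
      have e2 : M * (δ * a (n+1))
            + (ε/4 * (a (n+1) + M * (δ * a (n+1)) + (N:ℝ) * (M * (δ * a (n+1))))
              + (N:ℝ) * (2 * M * (δ * a (n+1))))
          = ε/4 * a (n+1) + (δ * K) * a (n+1) := by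
        rw [hKdef]; ring
      rw [e2, hδK] at key
      linarith
    rw [Real.norm_eq_abs, abs_div, abs_of_pos han1, div_lt_iff₀ han1]
    have : ε/2 * a (n+1) < ε * a (n+1) := by nlinarith
    linarith
  have hA1 : ∀ᶠ n in atTop, 0 < a (n+1) := by
    obtain ⟨m, hm⟩ := eventually_atTop.mp hApos
    exact eventually_atTop.mpr ⟨m, fun n hn => hm (n+1) (by omega)⟩
  have main2 : Tendsto (fun n => a n / a (n+1)) atTop (nhds 1) := by
    have h := (tendsto_const_nhds (x := (1:ℝ)) (f := atTop)).sub main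
    rw [sub_zero] at h
    apply h.congr'
    filter_upwards [hA1] with n hpos
    field_simp
    ring
  rw [← tendsto_add_atTop_iff_nat 1]
  simpa using main2
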